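/- Let f : ℝⁿ × ℝᵐ → ℝⁿ, let 𝒰 ⊆ ℝᵐ be nonempty, let V₁ : ℝⁿ → ℝ be continuous with K = {x ∈ ℝⁿ : V₁(x) ≤ 0} nonempty and compact, let W(x,u) = xᵀQx + uᵀRu with Q ∈ ℝⁿˣⁿ and R ∈ ℝᵐˣᵐ positive definite, and let α > 0. Assume the control Lyapunov condition: for every y ∈ ℝⁿ with V₁(y) ≤ 0 there exists u ∈ 𝒰 with W(y,u) ≤ α·(V₁(y) − V₁(f(y,u))). Let (x_k)_{k≥0} in ℝⁿ and (u_k)_{k≥0} in 𝒰 be a closed-loop sequence such that x_{k+1} = f(x_k, u_k), V₁(x_{k+1}) ≤ 0, and each u_k is optimal for the one-step problem: for every u ∈ 𝒰 with V₁(f(x_k,u)) ≤ 0 one has α·V₁(f(x_k,u_k)) + W(x_k,u_k) ≤ α·V₁(f(x_k,u)) + W(x_k,u). Then x_k → 0 as k → ∞. -/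

import Mathlib

open Matrix

private lemma posdef_coercive {n : ℕ} {Q : Matrix (Fin n) (Fin n) ℝ} (hQ : Q.PosDef) :
    ∃ c > 0, ∀ v : Fin n → ℝ, c * ‖v‖ ^ 2 ≤ v ⬝ᵥ Q *ᵥ v := by
  have hg : Continuous fun v : Fin n → ℝ => v ⬝ᵥ Q *ᵥ v := by
    simp only [dotProduct, mulVec]; fun_prop
  by_cases hS : (Metric.sphere (0 : Fin n → ℝ) 1).Nonempty
  · obtain ⟨v₀, hv₀S, hmin⟩ := (isCompact_sphere (0 : Fin n → ℝ) 1).exists_isMinOn hS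
      hg.continuousOn
    have hv₀norm : ‖v₀‖ = 1 := by simpa using hv₀S
    have hv₀ne : v₀ ≠ 0 := by intro h; rw [h] at hv₀norm; simp at hv₀norm
    refine ⟨v₀ ⬝ᵥ Q *ᵥ v₀, hQ.dotProduct_mulVec_pos hv₀ne, fun v => ?_⟩
    rcases eq_or_ne v 0 with rfl | hv
    · simp
    · have ht : (0:ℝ) < ‖v‖ := norm_pos_iff.mpr hv
      set w : Fin n → ℝ := ‖v‖⁻¹ • v with hw
      have hwS : w ∈ Metric.sphere (0 : Fin n → ℝ) 1 := by
        simp [hw, norm_smul, abs_of_pos (inv_pos.mpr ht), inv_mul_cancel₀ ht.ne']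
      have hle := hmin hwS
      have hv_eq : v = ‖v‖ • w := by
        rw [hw, smul_smul, mul_inv_cancel₀ ht.ne', one_smul]
      have hscale : v ⬝ᵥ Q *ᵥ v = ‖v‖ ^ 2 * (w ⬝ᵥ Q *ᵥ w) := by
        conv_lhs => rw [hv_eq]
        rw [mulVec_smul, smul_dotProduct, dotProduct_smul, smul_eq_mul,
          smul_eq_mul]
        ring
      rw [hscale]
      calc v₀ ⬝ᵥ Q *ᵥ v₀ * ‖v‖ ^ 2 ≤ (w ⬝ᵥ Q *ᵥ w) * ‖v‖ ^ 2 := by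
            exact mul_le_mul_of_nonneg_right hle (by positivity)
        _ = ‖v‖ ^ 2 * (w ⬝ᵥ Q *ᵥ w) := by ring
  · refine ⟨1, one_pos, fun v => ?_⟩
    have hv : v = 0 := by
      by_contra h
      exact hS ⟨‖v‖⁻¹ • v, by
        simp [norm_smul, abs_of_pos (inv_pos.mpr (norm_pos_iff.mpr h)),
          inv_mul_cancel₀ (norm_pos_iff.mpr h).ne']⟩
    simp [hv]

/-- Attractivity of the origin for the one-step MPC closed loop: under the control
Lyapunov condition, any closed-loop sequence generated by optimizers of the one-step
problem converges to the origin. -/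
theorem one_step_mpc_closed_loop_convergence
    {n m : ℕ} (f : (Fin n → ℝ) → (Fin m → ℝ) → (Fin n → ℝ))
    (U : Set (Fin m → ℝ)) (hU₀ : U.Nonempty)
    (V₁ : (Fin n → ℝ) → ℝ) (hV₁ : Continuous V₁)
    (hK₀ : {x : Fin n → ℝ | V₁ x ≤ 0}.Nonempty)
    (hK : IsCompact {x : Fin n → ℝ | V₁ x ≤ 0})
    (Q : Matrix (Fin n) (Fin n) ℝ) (R : Matrix (Fin m) (Fin m) ℝ)
    (hQ : Q.PosDef) (hR : R.PosDef)
    (W : (Fin n → ℝ) → (Fin m → ℝ) → ℝ)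
    (hW : ∀ (x : Fin n → ℝ) (u : Fin m → ℝ), W x u = x ⬝ᵥ Q *ᵥ x + u ⬝ᵥ R *ᵥ u)
    (α : ℝ) (hα : 0 < α)
    (hclf : ∀ y : Fin n → ℝ, V₁ y ≤ 0 →
      ∃ u ∈ U, W y u ≤ α * (V₁ y - V₁ (f y u)))
    (x : ℕ → (Fin n → ℝ)) (u : ℕ → (Fin m → ℝ))
    (hu : ∀ k : ℕ, u k ∈ U)
    (hx : ∀ k : ℕ, x (k + 1) = f (x k) (u k))
    (hfeas : ∀ k : ℕ, V₁ (x (k + 1)) ≤ 0)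
    (hoptimal : ∀ k : ℕ, ∀ u' ∈ U, V₁ (f (x k) u') ≤ 0 →
      α * V₁ (f (x k) (u k)) + W (x k) (u k) ≤ α * V₁ (f (x k) u') + W (x k) u') :
    Filter.Tendsto x Filter.atTop (nhds 0) := by
  obtain ⟨c, hc, hcoer⟩ := posdef_coercive hQ
  have hqQ : ∀ v : Fin n → ℝ, 0 ≤ v ⬝ᵥ Q *ᵥ v := fun v =>
    le_trans (by positivity) (hcoer v)
  have hqR : ∀ v : Fin m → ℝ, 0 ≤ v ⬝ᵥ R *ᵥ v := by
    intro v
    rcases eq_or_ne v 0 with rfl | h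
    · simp
    · exact (hR.dotProduct_mulVec_pos h).le
  have hWnn : ∀ y u', 0 ≤ W y u' := fun y u' => by
    rw [hW]; exact add_nonneg (hqQ y) (hqR u')
  have hdesc : ∀ k : ℕ, α * V₁ (x (k + 1 + 1)) + W (x (k + 1)) (u (k + 1)) ≤
      α * V₁ (x (k + 1)) := by
    intro k
    have hVk : V₁ (x (k + 1)) ≤ 0 := hfeas k
    obtain ⟨u', hu', hW'⟩ := hclf (x (k + 1)) hVk
    rw [mul_sub] at hW'
    have h0 := hWnn (x (k + 1)) u'
    have hdnn : 0 ≤ α * V₁ (x (k + 1)) - α * V₁ (f (x (k + 1)) u') := le_trans h0 hW'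
    have hf' : V₁ (f (x (k + 1)) u') ≤ 0 := by
      have : α * V₁ (f (x (k + 1)) u') ≤ α * V₁ (x (k + 1)) := by linarith
      have := le_of_mul_le_mul_left this hα
      linarith
    have hopt := hoptimal (k + 1) u' hu' hf'
    rw [← hx (k + 1)] at hopt
    linarith
  set a : ℕ → ℝ := fun k => V₁ (x (k + 1)) with ha
  have hanti : Antitone a := antitone_nat_of_succ_le fun k => by
    have h1 := hdesc k
    have h2 := hWnn (x (k + 1)) (u (k + 1))
    have : α * a (k + 1) ≤ α * a k := by simp only [ha]; linarith
    exact le_of_mul_le_mul_left this hα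
  obtain ⟨z, hzK, hzmin⟩ := hK.exists_isMinOn hK₀ hV₁.continuousOn
  have hbdd : BddBelow (Set.range a) := by
    refine ⟨V₁ z, ?_⟩
    rintro y ⟨k, rfl⟩
    exact hzmin (hfeas k)
  have haconv : Filter.Tendsto a Filter.atTop (nhds (⨅ i, a i)) :=
    tendsto_atTop_ciInf hanti hbdd
  have haconv' : Filter.Tendsto (fun k => a (k + 1)) Filter.atTop (nhds (⨅ i, a i)) :=
    haconv.comp (Filter.tendsto_add_atTop_nat 1)
  have hdiff : Filter.Tendsto (fun k => α * (a k - a (k + 1))) Filter.atTop (nhds 0) := by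
    have := (haconv.sub haconv').const_mul α
    simpa using this
  have hWtend : Filter.Tendsto (fun k => W (x (k + 1)) (u (k + 1))) Filter.atTop (nhds 0) := by
    refine squeeze_zero (fun k => hWnn _ _) (fun k => ?_) hdiff
    have := hdesc k
    simp only [ha]
    linarith
  have h1 : Filter.Tendsto (fun k => c * ‖x (k + 1)‖ ^ 2) Filter.atTop (nhds 0) := by
    refine squeeze_zero (fun k => by positivity) (fun k => ?_) hWtend
    refine le_trans (hcoer (x (k + 1))) ?_
    rw [hW]
    have := hqR (u (k + 1))
    linarith
  have h2 : Filter.Tendsto (fun k => ‖x (k + 1)‖ ^ 2) Filter.atTop (nhds 0) := by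
    have := h1.const_mul c⁻¹
    simpa [← mul_assoc, inv_mul_cancel₀ hc.ne'] using this
  have h3 : Filter.Tendsto (fun k => ‖x (k + 1)‖) Filter.atTop (nhds 0) := by
    have h := h2.sqrt
    simpa [Real.sqrt_sq (norm_nonneg _)] using h
  have h4 : Filter.Tendsto (fun k => x (k + 1)) Filter.atTop (nhds 0) :=
    tendsto_zero_iff_norm_tendsto_zero.mpr h3
  exact (Filter.tendsto_add_atTop_iff_nat 1).mp h4
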